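/- Let p ≥ 1 and let α_1, …, α_p ∈ ℂ[[y]]. Let h < h' be positive integers and let k, k' ∈ {1,…,p} be indices with O(α_k, α_{k'}) ≥ h. Then Σ_{i=1}^p min(h, O(α_k, α_i)) < Σ_{i=1}^p min(h', O(α_{k'}, α_i)), where the minima are taken in ℕ ∪ {∞} with min(h, ∞) = h. -/

import Mathlib

/-- Lemma 3 of the paper: if the pseudo-ball `B' = B(α_{k'}, h')` is strictly contained
in `B = B(α_k, h)`, then `q(B) < q(B')`. -/
theorem stmt_4 (p : ℕ) (hp : 1 ≤ p) (α : Fin p → PowerSeries ℂ)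
    (h h' : ℕ) (hh : 0 < h) (hlt : h < h') (k k' : Fin p)
    (hcontact : (h : ℕ∞) ≤ (α k - α k').order) :
    (∑ i, min (h : ℕ∞) ((α k - α i).order)) < ∑ i, min (h' : ℕ∞) ((α k' - α i).order) := by
  set f : Fin p → ℕ∞ := fun i => min (h : ℕ∞) ((α k - α i).order) with hf
  set g : Fin p → ℕ∞ := fun i => min (h' : ℕ∞) ((α k' - α i).order) with hg
  have hhh' : (h : ℕ∞) < (h' : ℕ∞) := by exact_mod_cast hlt
  have hpt : ∀ i, i ≠ k' → f i ≤ g i := by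
    intro i _
    by_cases hi : (α k' - α i).order < (h : ℕ∞)
    · have hne : (α k - α k').order ≠ (α k' - α i).order :=
        ne_of_gt (lt_of_lt_of_le hi hcontact)
      have hsum : α k - α i = (α k - α k') + (α k' - α i) := by ring
      have horder : (α k - α i).order = (α k' - α i).order := by
        rw [hsum, PowerSeries.order_add_of_order_ne _ _ hne]
        exact min_eq_right (le_of_lt (lt_of_lt_of_le hi hcontact))
      simp only [hf, hg, horder]
      exact min_le_min (le_of_lt hhh') le_rfl
    · push_neg at hi
      calc f i ≤ (h : ℕ∞) := min_le_left _ _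
        _ ≤ g i := le_min (le_of_lt hhh') hi
  have hfk' : f k' = (h : ℕ∞) := min_eq_left hcontact
  have hgk' : g k' = (h' : ℕ∞) := by
    simp [hg, PowerSeries.order_eq_top.mpr (sub_self (α k'))]
  rw [← Finset.add_sum_erase _ f (Finset.mem_univ k'),
      ← Finset.add_sum_erase _ g (Finset.mem_univ k')]
  have hS : ∑ i ∈ Finset.univ.erase k', f i ≤ ∑ i ∈ Finset.univ.erase k', g i :=
    Finset.sum_le_sum fun i hi => hpt i (Finset.ne_of_mem_erase hi)
  have hSne : ∑ i ∈ Finset.univ.erase k', g i ≠ ⊤ := by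
    refine WithTop.sum_ne_top.mpr fun i _ => ?_
    exact ne_top_of_le_ne_top (WithTop.coe_ne_top) (min_le_left _ _)
  calc f k' + ∑ i ∈ Finset.univ.erase k', f i
      ≤ f k' + ∑ i ∈ Finset.univ.erase k', g i := add_le_add_right hS _
    _ < g k' + ∑ i ∈ Finset.univ.erase k', g i := by
        rw [hfk', hgk']
        exact WithTop.add_lt_add_right hSne hhh'
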